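/- Let G be an additive abelian group and η : G → ℂ a positive definite function with η(0) > 0. Then the function ρ(s,t) := |1 − η(s−t)/η(0)|^{1/2} is a translation-invariant pseudometric on G bounded by √2: for all r, s, t, u ∈ G one has ρ(s,s) = 0, ρ(s,t) = ρ(t,s), ρ(s,u) ≤ ρ(s,t) + ρ(t,u), ρ(s+r, t+r) = ρ(s,t), and ρ(s,t) ≤ √2. -/

import Mathlib

/-- A function `η : G → ℂ` on an additive abelian group is positive definite if all the
finite double sums `∑ i, ∑ j, c i * conj (c j) * η (x i - x j)` are nonnegative reals. -/
def IsPositiveDefiniteFn {G : Type*} [AddCommGroup G] (η : G → ℂ) : Prop :=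
  ∀ (N : ℕ) (x : Fin N → G) (c : Fin N → ℂ),
    ∃ r : ℝ, 0 ≤ r ∧ ∑ i, ∑ j, c i * (starRingEnd ℂ) (c j) * η (x i - x j) = (r : ℂ)

/-- The autocorrelation pseudometric `ρ(s,t) = |1 − η(s−t)/η(0)|^{1/2}`. -/
noncomputable def acRho {G : Type*} [AddCommGroup G] (η : G → ℂ) (s t : G) : ℝ :=
  Real.sqrt ‖1 - η (s - t) / η 0‖

/-- The set of `ε`-almost periods `P_ε = {t : ρ(t,0) < ε}`. -/
noncomputable def almostPeriods {G : Type*} [AddCommGroup G] (η : G → ℂ) (ε : ℝ) : Set G :=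
  {t : G | acRho η t 0 < ε}

private lemma acRho_quad_aux (A B D : ℝ) (hA : 0 ≤ A) (hB : 0 ≤ B) (hD : 0 ≤ D)
    (h : ∀ t : ℝ, 0 ≤ A * t ^ 2 + B * D - 2 * (t * D)) : D ≤ A * B := by
  rcases eq_or_lt_of_le hD with hD0 | hD0
  · nlinarith
  rcases eq_or_lt_of_le hA with hA0 | hA0
  · have h1 := h B
    have h2 := h (B + 1)
    nlinarith
  · have hDA : A * (D / A) = D := by field_simp
    have h1 := h (D / A)
    rw [pow_two, ← mul_assoc, hDA] at h1
    have h2 : D / A ≤ B := by nlinarith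
    rw [div_le_iff₀ hA0] at h2
    linarith

private lemma acRho_eta_zero_real {G : Type*} [AddCommGroup G] (η : G → ℂ)
    (hpd : IsPositiveDefiniteFn η) : η 0 = ((η 0).re : ℂ) := by
  obtain ⟨r, hr, hsum⟩ := hpd 1 ![0] ![1]
  simp [Fin.sum_univ_one] at hsum
  rw [hsum]; simp

private lemma acRho_eta_conj {G : Type*} [AddCommGroup G] (η : G → ℂ)
    (hpd : IsPositiveDefiniteFn η) (z : G) : η (-z) = (starRingEnd ℂ) (η z) := by
  have him : (η 0).im = 0 := by
    rw [acRho_eta_zero_real η hpd]; simp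
  obtain ⟨r1, hr1, h1⟩ := hpd 2 ![0, z] ![1, 1]
  obtain ⟨r2, hr2, h2⟩ := hpd 2 ![0, z] ![1, Complex.I]
  simp [Fin.sum_univ_two] at h1 h2
  have e1 := congrArg Complex.im h1
  have e2 := congrArg Complex.im h2
  simp [Complex.add_im, Complex.mul_im] at e1 e2
  apply Complex.ext <;> simp [Complex.conj_re, Complex.conj_im] <;> linarith

private lemma acRho_eta_bound {G : Type*} [AddCommGroup G] (η : G → ℂ)
    (hpd : IsPositiveDefiniteFn η) (z : G) : ‖η z‖ ≤ (η 0).re := by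
  have he := acRho_eta_zero_real η hpd
  have hconj := acRho_eta_conj η hpd
  by_cases hz : η z = 0
  · simp [hz]
    obtain ⟨r, hr, hsum⟩ := hpd 1 ![0] ![1]
    simp [Fin.sum_univ_one] at hsum
    rw [hsum]; simpa using hr
  · set a : ℝ := ‖η z‖ with ha
    have ha0 : 0 < a := by rw [ha]; exact (norm_pos_iff.mpr hz)
    set c1 : ℂ := -(starRingEnd ℂ) (η z) / (a : ℂ) with hc1
    obtain ⟨r, hr, hsum⟩ := hpd 2 ![0, z] ![1, c1]
    simp [Fin.sum_univ_two] at hsum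
    have hmc : (starRingEnd ℂ) (η z) * η z = ((a ^ 2 : ℝ) : ℂ) := by
      rw [mul_comm, Complex.mul_conj, Complex.normSq_eq_norm_sq]
    have h1 : c1 * η z = -(a : ℂ) := by
      rw [hc1, div_mul_eq_mul_div, neg_mul, hmc]
      push_cast
      rw [neg_div]
      congr 1
      rw [pow_two, mul_div_assoc, div_self (by exact_mod_cast ha0.ne'), mul_one]
    have h2 : (starRingEnd ℂ) c1 * η (-z) = -(a : ℂ) := by
      rw [hconj, ← map_mul, h1]
      simp
    have h3 : c1 * (starRingEnd ℂ) c1 = 1 := by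
      rw [Complex.mul_conj]
      have habs1 : ‖c1‖ = 1 := by
        rw [hc1, norm_div, norm_neg, Complex.norm_conj, Complex.norm_real, Real.norm_eq_abs,
          abs_of_pos ha0, ← ha, div_self ha0.ne']
      rw [Complex.normSq_eq_norm_sq, habs1]; norm_num
    have key : η 0 + (starRingEnd ℂ) c1 * η (-z) + (c1 * η z + c1 * (starRingEnd ℂ) c1 * η 0) = ↑r := by
      rw [← hsum]
    rw [h1, h2, h3, one_mul, he] at key
    have := congrArg Complex.re key
    simp at this
    linarith

private lemma acRho_key_ineq {G : Type*} [AddCommGroup G] (η : G → ℂ)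
    (hpd : IsPositiveDefiniteFn η) (hη0 : 0 < (η 0).re) (a b : G) :
    ∀ z0 z2 : ℂ,
      0 ≤ (1 - Complex.normSq (η a / η 0)) * Complex.normSq z0
          + (1 - Complex.normSq (η b / η 0)) * Complex.normSq z2
          + 2 * (z2 * (starRingEnd ℂ) z0 *
              (η (a + b) / η 0 - η a / η 0 * (η b / η 0))).re := by
  have he := acRho_eta_zero_real η hpd
  have hconj := acRho_eta_conj η hpd
  intro z0 z2
  set e : ℝ := (η 0).re with hedef
  set u : ℂ := η a / η 0 with hu
  set v : ℂ := η b / η 0 with hv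
  set w : ℂ := η (a + b) / η 0 with hw
  have heC : ((e : ℂ)) ≠ 0 := by
    simpa using hη0.ne'
  have ea : η a = (e : ℂ) * u := by rw [hu, ← he]; field_simp [he ▸ heC]
  have eb : η b = (e : ℂ) * v := by rw [hv, ← he]; field_simp [he ▸ heC]
  have eab : η (a + b) = (e : ℂ) * w := by rw [hw, ← he]; field_simp [he ▸ heC]
  have ea' : η (-a) = (e : ℂ) * (starRingEnd ℂ) u := by
    rw [hconj, ea, map_mul, Complex.conj_ofReal]
  have eb' : η (-b) = (e : ℂ) * (starRingEnd ℂ) v := by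
    rw [hconj, eb, map_mul, Complex.conj_ofReal]
  have eab' : η (-b + -a) = (e : ℂ) * (starRingEnd ℂ) w := by
    rw [show -b + -a = -(a + b) by abel, hconj, eab, map_mul, Complex.conj_ofReal]
  obtain ⟨r, hr, hsum⟩ := hpd 3 ![0, a, a + b]
      ![z0, -(z0 * (starRingEnd ℂ) u + z2 * v), z2]
  simp only [Fin.sum_univ_three, Matrix.cons_val_zero, Matrix.cons_val_one, Matrix.head_cons,
    Matrix.cons_val_two, Matrix.tail_cons] at hsum
  rw [show (0:G) - 0 = 0 by abel, show (0:G) - a = -a by abel,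
    show (0:G) - (a+b) = -b + -a by abel, show a - 0 = a by abel, show a - a = 0 by abel,
    show a - (a + b) = -b by abel, show a + b - 0 = a + b by abel,
    show a + b - a = b by abel, show a + b - (a + b) = 0 by abel] at hsum
  rw [he, ea, eb, eab, ea', eb', eab'] at hsum
  simp only [map_add, map_mul, map_neg, Complex.conj_conj] at hsum
  set T : ℂ := (1 - u * (starRingEnd ℂ) u) * (z0 * (starRingEnd ℂ) z0)
      + (1 - v * (starRingEnd ℂ) v) * (z2 * (starRingEnd ℂ) z2)
      + (z2 * (starRingEnd ℂ) z0 * (w - u * v)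
        + (starRingEnd ℂ) z2 * z0 * (starRingEnd ℂ) (w - u * v)) with hT
  have hkey : (e : ℂ) * T = (r : ℂ) := by
    rw [← hsum, hT]
    simp only [map_sub, map_mul, map_add, map_neg, Complex.conj_conj]
    ring
  have hTreal : T = ((( (1 - Complex.normSq u) * Complex.normSq z0
      + (1 - Complex.normSq v) * Complex.normSq z2
      + 2 * (z2 * (starRingEnd ℂ) z0 * (w - u * v)).re : ℝ)) : ℂ) := by
    rw [hT]
    have h1 : u * (starRingEnd ℂ) u = ((Complex.normSq u : ℝ) : ℂ) := Complex.mul_conj u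
    have h2 : v * (starRingEnd ℂ) v = ((Complex.normSq v : ℝ) : ℂ) := Complex.mul_conj v
    have h3 : z0 * (starRingEnd ℂ) z0 = ((Complex.normSq z0 : ℝ) : ℂ) := Complex.mul_conj z0
    have h4 : z2 * (starRingEnd ℂ) z2 = ((Complex.normSq z2 : ℝ) : ℂ) := Complex.mul_conj z2
    have h5 : (starRingEnd ℂ) z2 * z0 * (starRingEnd ℂ) (w - u * v)
        = (starRingEnd ℂ) (z2 * (starRingEnd ℂ) z0 * (w - u * v)) := by
      simp only [map_mul, Complex.conj_conj]
    rw [h1, h2, h3, h4, h5, Complex.add_conj]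
    push_cast
    ring
  rw [hTreal] at hkey
  rw [← Complex.ofReal_mul, Complex.ofReal_inj] at hkey
  have : 0 ≤ e * ((1 - Complex.normSq u) * Complex.normSq z0
      + (1 - Complex.normSq v) * Complex.normSq z2
      + 2 * (z2 * (starRingEnd ℂ) z0 * (w - u * v)).re) := hkey ▸ hr
  nlinarith [hη0]

private lemma acRho_krein {G : Type*} [AddCommGroup G] (η : G → ℂ)
    (hpd : IsPositiveDefiniteFn η) (hη0 : 0 < (η 0).re) (a b : G) :
    Complex.normSq (η (a + b) / η 0 - η a / η 0 * (η b / η 0))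
      ≤ (1 - Complex.normSq (η a / η 0)) * (1 - Complex.normSq (η b / η 0)) := by
  have he := acRho_eta_zero_real η hpd
  set u : ℂ := η a / η 0 with hu
  set v : ℂ := η b / η 0 with hv
  set d : ℂ := η (a + b) / η 0 - u * v with hd
  have habs0 : ‖η 0‖ = (η 0).re := by
    rw [he, Complex.norm_real, Real.norm_eq_abs, abs_of_pos hη0]
    exact (Complex.ofReal_re _).symm
  have hnu : Complex.normSq u ≤ 1 := by
    rw [hu, Complex.normSq_eq_norm_sq, norm_div, habs0]
    have := acRho_eta_bound η hpd a
    have h01 : ‖η a‖ / (η 0).re ≤ 1 := by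
      rw [div_le_one hη0]; exact this
    nlinarith [norm_nonneg (η a), div_nonneg (norm_nonneg (η a)) hη0.le]
  have hnv : Complex.normSq v ≤ 1 := by
    rw [hv, Complex.normSq_eq_norm_sq, norm_div, habs0]
    have := acRho_eta_bound η hpd b
    have h01 : ‖η b‖ / (η 0).re ≤ 1 := by
      rw [div_le_one hη0]; exact this
    nlinarith [norm_nonneg (η b), div_nonneg (norm_nonneg (η b)) hη0.le]
  apply acRho_quad_aux _ _ _ (by linarith) (by linarith) (Complex.normSq_nonneg d)
  intro t
  have hk := acRho_key_ineq η hpd hη0 a b (t : ℂ) (-(starRingEnd ℂ) d)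
  rw [← hu, ← hv, ← hd] at hk
  have e1 : Complex.normSq ((t : ℂ)) = t ^ 2 := by
    rw [Complex.normSq_ofReal, pow_two]
  have e2 : Complex.normSq (-(starRingEnd ℂ) d) = Complex.normSq d := by simp
  have e3 : (-(starRingEnd ℂ) d * (starRingEnd ℂ) ((t : ℂ)) * d).re
      = -(t * Complex.normSq d) := by
    rw [Complex.conj_ofReal]
    have : -(starRingEnd ℂ) d * (t : ℂ) * d = -((t : ℝ) : ℂ) * ((Complex.normSq d : ℝ) : ℂ) := by
      rw [show -(starRingEnd ℂ) d * (t : ℂ) * d = -(t : ℂ) * (d * (starRingEnd ℂ) d) by ring,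
        Complex.mul_conj]
    rw [this]
    push_cast
    simp [Complex.ofReal_mul]
  rw [e1, e2, e3] at hk
  linarith

/-- For a positive definite `η` with `η(0) > 0`, `ρ(s,t) = |1 − η(s−t)/η(0)|^{1/2}` is a
translation-invariant pseudometric on `G`, bounded by `√2`. -/
theorem acRho_pseudometric {G : Type*} [AddCommGroup G] (η : G → ℂ)
    (hpd : IsPositiveDefiniteFn η) (hη0 : 0 < (η 0).re) :
    ∀ r s t u : G,
      acRho η s s = 0 ∧
      acRho η s t = acRho η t s ∧
      acRho η s u ≤ acRho η s t + acRho η t u ∧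
      acRho η (s + r) (t + r) = acRho η s t ∧
      acRho η s t ≤ Real.sqrt 2 := by
  have he := acRho_eta_zero_real η hpd
  have hconj := acRho_eta_conj η hpd
  have hne : η 0 ≠ 0 := by
    intro h; rw [h] at hη0; simp at hη0
  have habs0 : ‖η 0‖ = (η 0).re := by
    rw [he, Complex.norm_real, Real.norm_eq_abs, abs_of_pos hη0]
    exact (Complex.ofReal_re _).symm
  have habsu : ∀ z : G, ‖η z / η 0‖ ≤ 1 := by
    intro z
    rw [norm_div, habs0, div_le_one hη0]
    exact acRho_eta_bound η hpd z
  intro r s t u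
  refine ⟨?_, ?_, ?_, ?_, ?_⟩
  · rw [acRho, sub_self, div_self hne, sub_self]
    simp
  · -- symmetry
    rw [acRho, acRho]
    congr 1
    have : η (t - s) = (starRingEnd ℂ) (η (s - t)) := by
      rw [show t - s = -(s - t) by abel, hconj]
    rw [this]
    have : 1 - (starRingEnd ℂ) (η (s - t)) / η 0
        = (starRingEnd ℂ) (1 - η (s - t) / η 0) := by
      rw [map_sub, map_one, map_div₀]
      rw [he, Complex.conj_ofReal]
    rw [this, Complex.norm_conj]
  · -- triangle inequality
    set a := s - t with hadef
    set b := t - u with hbdef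
    have hab : s - u = a + b := by rw [hadef, hbdef]; abel
    set x : ℝ := ‖1 - η a / η 0‖ with hx
    set y : ℝ := ‖1 - η b / η 0‖ with hy
    have hx0 : 0 ≤ x := norm_nonneg _
    have hy0 : 0 ≤ y := norm_nonneg _
    set uu : ℂ := η a / η 0 with huu
    set vv : ℂ := η b / η 0 with hvv
    set ww : ℂ := η (a + b) / η 0 with hww
    have huu1 : ‖uu‖ ≤ 1 := habsu a
    have hvv1 : ‖vv‖ ≤ 1 := habsu b
    -- |w - uv| ≤ 2 √x √y
    have hkrein := acRho_krein η hpd hη0 a b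
    have h2x : 1 - Complex.normSq uu ≤ 2 * x := by
      have h1 : 1 - ‖uu‖ ≤ x := by
        have := norm_sub_norm_le (1 : ℂ) uu
        simpa using this
      have := norm_nonneg uu
      rw [Complex.normSq_eq_norm_sq]
      nlinarith
    have h2y : 1 - Complex.normSq vv ≤ 2 * y := by
      have h1 : 1 - ‖vv‖ ≤ y := by
        have := norm_sub_norm_le (1 : ℂ) vv
        simpa using this
      have := norm_nonneg vv
      rw [Complex.normSq_eq_norm_sq]
      nlinarith
    have hd2 : (‖ww - uu * vv‖) ^ 2 ≤ 4 * (x * y) := by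
      have h1 : Complex.normSq (ww - uu * vv) ≤ (1 - Complex.normSq uu) * (1 - Complex.normSq vv) := hkrein
      have h2 : (1 - Complex.normSq uu) * (1 - Complex.normSq vv) ≤ (2 * x) * (2 * y) := by
        have hA : 0 ≤ 1 - Complex.normSq uu := by
          rw [Complex.normSq_eq_norm_sq]; nlinarith [norm_nonneg uu]
        have hB : 0 ≤ 1 - Complex.normSq vv := by
          rw [Complex.normSq_eq_norm_sq]; nlinarith [norm_nonneg vv]
        have := mul_le_mul h2x h2y hB (by linarith)
        linarith
      rw [← Complex.normSq_eq_norm_sq]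
      nlinarith
    have hdle : ‖ww - uu * vv‖ ≤ 2 * (Real.sqrt x * Real.sqrt y) := by
      have h4 : (2 * (Real.sqrt x * Real.sqrt y)) ^ 2 = 4 * (x * y) := by
        rw [mul_pow, mul_pow, Real.sq_sqrt hx0, Real.sq_sqrt hy0]; ring
      nlinarith [norm_nonneg (ww - uu * vv),
        mul_nonneg (Real.sqrt_nonneg x) (Real.sqrt_nonneg y)]
    have hmain : ‖1 - ww‖ ≤ x + y + 2 * (Real.sqrt x * Real.sqrt y) := by
      have hsplit : (1 : ℂ) - ww = (1 - uu) + uu * (1 - vv) + (uu * vv - ww) := by ring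
      calc ‖1 - ww‖
          ≤ ‖(1 - uu) + uu * (1 - vv)‖ + ‖uu * vv - ww‖ := by
            rw [hsplit]; exact norm_add_le _ _
        _ ≤ ‖1 - uu‖ + ‖uu * (1 - vv)‖ + ‖uu * vv - ww‖ := by
            have := norm_add_le (1 - uu) (uu * (1 - vv))
            linarith
        _ ≤ x + y + 2 * (Real.sqrt x * Real.sqrt y) := by
            have e1 : ‖uu * (1 - vv)‖ ≤ y := by
              rw [norm_mul]
              calc ‖uu‖ * ‖1 - vv‖ ≤ 1 * y := by
                    apply mul_le_mul huu1 (le_of_eq rfl) (norm_nonneg _) zero_le_one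
                _ = y := one_mul y
            have e2 : ‖uu * vv - ww‖ = ‖ww - uu * vv‖ := by
              rw [← norm_neg]; congr 1; ring
            rw [e2] at *
            linarith
    have hfinal : acRho η s u ≤ Real.sqrt x + Real.sqrt y := by
      rw [acRho, hab, ← hww]
      have hsq : x + y + 2 * (Real.sqrt x * Real.sqrt y) = (Real.sqrt x + Real.sqrt y) ^ 2 := by
        rw [add_sq, Real.sq_sqrt hx0, Real.sq_sqrt hy0]; ring
      calc Real.sqrt (‖1 - ww‖)
          ≤ Real.sqrt ((Real.sqrt x + Real.sqrt y) ^ 2) := by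
            apply Real.sqrt_le_sqrt; rw [← hsq]; exact hmain
        _ = Real.sqrt x + Real.sqrt y := by
            rw [Real.sqrt_sq (by positivity)]
    exact hfinal
  · -- translation invariance
    rw [acRho, acRho, show s + r - (t + r) = s - t by abel]
  · -- bound by √2
    rw [acRho]
    apply Real.sqrt_le_sqrt
    calc ‖1 - η (s - t) / η 0‖
        ≤ ‖(1:ℂ)‖ + ‖η (s - t) / η 0‖ := by
          exact norm_sub_le _ _
      _ ≤ 1 + 1 := by
          rw [norm_one]
          exact add_le_add_right (habsu (s - t)) 1
      _ = 2 := by norm_num
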